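/- There exist universal constants c > 0 and C < ∞ such that for all d ≥ 0 and μ*, ν*, ξ* ≥ 0, the measure |H| of the set H ⊆ (ℝ/4πℤ) × ℝ (the projection of the hexagon H̃ = {(μ+ν, dν+ξ) : |μ| ≤ μ*, |ν| ≤ ν*, |ξ| ≤ ξ*}) satisfies c·V̄ ≤ |H| ≤ C·V̄, where V̄ = min(dμ*ν* + μ*ξ* + ν*ξ*, dν* + ξ*). -/

import Mathlib

open MeasureTheory Set

instance : Fact (0 < 4 * Real.pi) := ⟨by positivity⟩

namespace Stmt15Aux

noncomputable def q : ℝ × ℝ → AddCircle (4 * Real.pi) × ℝ :=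
  fun p => ((p.1 : AddCircle (4 * Real.pi)), p.2)

lemma continuous_q : Continuous q :=
  ((AddCircle.continuous_mk' _).comp continuous_fst).prodMk continuous_snd

lemma vol_line (c : ℝ) : volume ({c} ×ˢ (univ : Set ℝ)) = 0 := by
  rw [Measure.volume_eq_prod, Measure.prod_prod, Real.volume_singleton, zero_mul]

lemma lower1d (a : ℝ) (B : Set ℝ) (hB : B ⊆ Ioc a (a + 4 * Real.pi)) :
    volume B ≤ volume ((fun x : ℝ => (x : AddCircle (4 * Real.pi))) '' B) := by
  have mp := AddCircle.measurePreserving_mk (T := 4 * Real.pi) a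
  have h1 : volume B = (volume.restrict (Ioc a (a + 4 * Real.pi))) B := by
    rw [Measure.restrict_apply' measurableSet_Ioc, Set.inter_eq_self_of_subset_left hB]
  rw [h1]
  calc (volume.restrict (Ioc a (a + 4 * Real.pi))) B
      ≤ (volume.restrict (Ioc a (a + 4 * Real.pi)))
          ((fun x : ℝ => (x : AddCircle (4 * Real.pi))) ⁻¹'
            ((fun x : ℝ => (x : AddCircle (4 * Real.pi))) '' B)) :=
        measure_mono (subset_preimage_image _ _)
    _ ≤ (Measure.map (fun x : ℝ => (x : AddCircle (4 * Real.pi)))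
          (volume.restrict (Ioc a (a + 4 * Real.pi))))
          ((fun x : ℝ => (x : AddCircle (4 * Real.pi))) '' B) :=
        Measure.le_map_apply AddCircle.measurable_mk'.aemeasurable _
    _ = volume ((fun x : ℝ => (x : AddCircle (4 * Real.pi))) '' B) := by rw [mp.map_eq]

lemma slice_le (S : Set (AddCircle (4 * Real.pi) × ℝ)) :
    (∫⁻ y, volume {θ : AddCircle (4 * Real.pi) | (θ, y) ∈ S}) ≤ volume S := by
  set T := toMeasurable volume S with hTdef
  have hT : MeasurableSet T := measurableSet_toMeasurable _ _
  calc (∫⁻ y, volume {θ : AddCircle (4 * Real.pi) | (θ, y) ∈ S})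
      ≤ ∫⁻ y, volume {θ : AddCircle (4 * Real.pi) | (θ, y) ∈ T} :=
        lintegral_mono fun y => measure_mono fun θ hθ => subset_toMeasurable _ _ hθ
    _ = volume T := by
        rw [Measure.volume_eq_prod, Measure.prod_apply_symm hT]; rfl
    _ = volume S := by rw [hTdef]; exact measure_toMeasurable S

lemma lowerMain {A : Set (ℝ × ℝ)} (hA : MeasurableSet A) (g : ℝ → ℝ)
    (hg : ∀ p ∈ A, p.1 ∈ Ioc (g p.2) (g p.2 + 4 * Real.pi)) :
    volume A ≤ volume (q '' A) := by
  have h1 : volume A = ∫⁻ y, volume {x : ℝ | (x, y) ∈ A} := by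
    rw [Measure.volume_eq_prod, Measure.prod_apply_symm hA]; rfl
  rw [h1]
  refine le_trans (lintegral_mono fun y => ?_) (slice_le (q '' A))
  refine (lower1d (g y) _ fun x hx => hg _ hx).trans (measure_mono ?_)
  rintro θ ⟨x, hx, rfl⟩
  exact ⟨(x, y), hx, rfl⟩

lemma mp_q (a : ℝ) : MeasurePreserving q
    (volume.restrict (Ioc a (a + 4 * Real.pi) ×ˢ (univ : Set ℝ))) volume := by
  have h := (AddCircle.measurePreserving_mk (T := 4 * Real.pi) a).prod
    (MeasurePreserving.id (volume : Measure ℝ))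
  rw [Measure.volume_eq_prod]
  have h2 : (volume.restrict (Ioc a (a + 4 * Real.pi))).prod (volume : Measure ℝ)
      = volume.restrict (Ioc a (a + 4 * Real.pi) ×ˢ (univ : Set ℝ)) := by
    rw [← Measure.restrict_univ (μ := (volume : Measure ℝ)), Measure.prod_restrict,
      Measure.restrict_univ, ← Measure.volume_eq_prod]
  rwa [h2] at h

lemma upperPiece {K : Set (ℝ × ℝ)} (a : ℝ) (hK : IsCompact K)
    (hKs : K ⊆ Icc a (a + 4 * Real.pi) ×ˢ (univ : Set ℝ)) :
    volume (q '' K) ≤ volume K := by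
  have hqK : IsCompact (q '' K) := hK.image continuous_q
  have mp := mp_q a
  have h1 : volume (q '' K)
      = volume.restrict (Ioc a (a + 4 * Real.pi) ×ˢ (univ : Set ℝ)) (q ⁻¹' (q '' K)) :=
    (mp.measure_preimage hqK.measurableSet.nullMeasurableSet).symm
  rw [h1, Measure.restrict_apply' (measurableSet_Ioc.prod MeasurableSet.univ)]
  have hpi : (0:ℝ) < Real.pi := Real.pi_pos
  have h2 : q ⁻¹' (q '' K) ∩ (Ioc a (a + 4 * Real.pi) ×ˢ (univ : Set ℝ))
      ⊆ K ∪ ({a + 4 * Real.pi} ×ˢ (univ : Set ℝ)) := by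
    rintro ⟨x, y⟩ ⟨⟨⟨x', y'⟩, hK', heq⟩, hD, -⟩
    have hy : y' = y := congrArg Prod.snd heq
    have hx : (x' : AddCircle (4 * Real.pi)) = (x : AddCircle (4 * Real.pi)) :=
      congrArg Prod.fst heq
    have hmem : x' - x ∈ AddSubgroup.zmultiples (4 * Real.pi) :=
      QuotientAddGroup.eq_iff_sub_mem.mp hx
    obtain ⟨k, hk⟩ := AddSubgroup.mem_zmultiples_iff.mp hmem
    rw [zsmul_eq_mul] at hk
    have hx'1 : a ≤ x' := (hKs hK').1.1
    have hx'2 : x' ≤ a + 4 * Real.pi := (hKs hK').1.2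
    have hx1 : a < x := hD.1
    have hx2 : x ≤ a + 4 * Real.pi := hD.2
    have hk1 : (k : ℝ) < 1 := by nlinarith
    have hk2 : (-1 : ℝ) ≤ (k : ℝ) := by nlinarith
    have hk1' : k ≤ 0 := by exact_mod_cast Int.lt_add_one_iff.mp (by exact_mod_cast hk1)
    have hk2' : (-1 : ℤ) ≤ k := by exact_mod_cast hk2
    interval_cases k
    · right
      have hxx : x' - x = -(4 * Real.pi) := by rw [← hk]; push_cast; ring
      refine ⟨?_, trivial⟩
      simp only [mem_singleton_iff]
      linarith
    · left
      have hxx : x' = x := by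
        have h0 : x' - x = 0 := by rw [← hk]; push_cast; ring
        linarith
      rw [← hxx, ← hy]
      exact hK'
  calc volume (q ⁻¹' (q '' K) ∩ (Ioc a (a + 4 * Real.pi) ×ˢ (univ : Set ℝ)))
      ≤ volume (K ∪ ({a + 4 * Real.pi} ×ˢ (univ : Set ℝ))) := measure_mono h2
    _ ≤ volume K + volume ({a + 4 * Real.pi} ×ˢ (univ : Set ℝ)) := measure_union_le _ _
    _ = volume K := by rw [vol_line, add_zero]

lemma slabMeas1 (a b c : ℝ) :
    MeasurableSet {p : ℝ × ℝ | |p.1| ≤ a ∧ |p.2 - c * p.1| ≤ b} := by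
  have h1 : IsClosed {p : ℝ × ℝ | |p.1| ≤ a} :=
    isClosed_le continuous_fst.abs continuous_const
  have h2 : IsClosed {p : ℝ × ℝ | |p.2 - c * p.1| ≤ b} :=
    isClosed_le (continuous_snd.sub (continuous_const.mul continuous_fst)).abs continuous_const
  exact (h1.inter h2).measurableSet

lemma slabMeas2 (a b c : ℝ) :
    MeasurableSet {p : ℝ × ℝ | |p.2| ≤ a ∧ |p.1 - c * p.2| ≤ b} := by
  have h1 : IsClosed {p : ℝ × ℝ | |p.2| ≤ a} :=
    isClosed_le continuous_snd.abs continuous_const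
  have h2 : IsClosed {p : ℝ × ℝ | |p.1 - c * p.2| ≤ b} :=
    isClosed_le (continuous_fst.sub (continuous_const.mul continuous_snd)).abs continuous_const
  exact (h1.inter h2).measurableSet

lemma areaSlab1 {a b : ℝ} (c : ℝ) (ha : 0 ≤ a) (hb : 0 ≤ b) :
    volume {p : ℝ × ℝ | |p.1| ≤ a ∧ |p.2 - c * p.1| ≤ b}
      = ENNReal.ofReal ((2 * a) * (2 * b)) := by
  have hS := slabMeas1 a b c
  rw [Measure.volume_eq_prod, Measure.prod_apply hS]
  have hsec : ∀ x : ℝ, (volume (Prod.mk x ⁻¹' {p : ℝ × ℝ | |p.1| ≤ a ∧ |p.2 - c * p.1| ≤ b}))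
      = (Icc (-a) a).indicator (fun _ => ENNReal.ofReal (2 * b)) x := by
    intro x
    by_cases hx : |x| ≤ a
    · have hset : Prod.mk x ⁻¹' {p : ℝ × ℝ | |p.1| ≤ a ∧ |p.2 - c * p.1| ≤ b}
          = Icc (c * x - b) (c * x + b) := by
        ext y
        simp only [mem_preimage, mem_setOf_eq, mem_Icc, hx, true_and]
        rw [abs_le]
        constructor <;> rintro ⟨h1, h2⟩ <;> constructor <;> linarith
      rw [hset, Real.volume_Icc, indicator_of_mem (abs_le.mp hx |> fun h => mem_Icc.mpr h)]
      congr 1; ring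
    · have hset : Prod.mk x ⁻¹' {p : ℝ × ℝ | |p.1| ≤ a ∧ |p.2 - c * p.1| ≤ b} = ∅ := by
        ext y; simp only [mem_preimage, mem_setOf_eq, mem_empty_iff_false, iff_false]
        rintro ⟨h1, -⟩; exact hx h1
      rw [hset, measure_empty, indicator_of_notMem (by rwa [mem_Icc, ← abs_le])]
  rw [lintegral_congr hsec, lintegral_indicator measurableSet_Icc _, setLIntegral_const,
    Real.volume_Icc]
  rw [← ENNReal.ofReal_mul (by positivity)]
  congr 1; ring

lemma areaSlab2 {a b : ℝ} (c : ℝ) (ha : 0 ≤ a) (hb : 0 ≤ b) :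
    volume {p : ℝ × ℝ | |p.2| ≤ a ∧ |p.1 - c * p.2| ≤ b}
      = ENNReal.ofReal ((2 * a) * (2 * b)) := by
  have hS := slabMeas2 a b c
  rw [Measure.volume_eq_prod, Measure.prod_apply_symm hS]
  have hsec : ∀ y : ℝ,
      (volume ((fun x => (x, y)) ⁻¹' {p : ℝ × ℝ | |p.2| ≤ a ∧ |p.1 - c * p.2| ≤ b}))
      = (Icc (-a) a).indicator (fun _ => ENNReal.ofReal (2 * b)) y := by
    intro y
    by_cases hy : |y| ≤ a
    · have hset : (fun x => (x, y)) ⁻¹' {p : ℝ × ℝ | |p.2| ≤ a ∧ |p.1 - c * p.2| ≤ b}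
          = Icc (c * y - b) (c * y + b) := by
        ext x
        simp only [mem_preimage, mem_setOf_eq, mem_Icc, hy, true_and]
        rw [abs_le]
        constructor <;> rintro ⟨h1, h2⟩ <;> constructor <;> linarith
      rw [hset, Real.volume_Icc, indicator_of_mem (abs_le.mp hy |> fun h => mem_Icc.mpr h)]
      congr 1; ring
    · have hset : (fun x => (x, y)) ⁻¹' {p : ℝ × ℝ | |p.2| ≤ a ∧ |p.1 - c * p.2| ≤ b} = ∅ := by
        ext x; simp only [mem_preimage, mem_setOf_eq, mem_empty_iff_false, iff_false]
        rintro ⟨h1, -⟩; exact hy h1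
      rw [hset, measure_empty, indicator_of_notMem (by rwa [mem_Icc, ← abs_le])]
  rw [lintegral_congr hsec, lintegral_indicator measurableSet_Icc _, setLIntegral_const,
    Real.volume_Icc]
  rw [← ENNReal.ofReal_mul (by positivity)]
  congr 1; ring

end Stmt15Aux

open Stmt15Aux

set_option maxHeartbeats 2000000 in
/-- Two-sided universal estimate for the measure of the wrapped hexagon `H` on the
cylinder `(ℝ/4πℤ) × ℝ`:
`c·min(dμ*ν* + μ*ξ* + ν*ξ*, dν* + ξ*) ≤ |H| ≤ C·min(dμ*ν* + μ*ξ* + ν*ξ*, dν* + ξ*)`. -/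
theorem stmt_15 :
    ∃ c C : ℝ, 0 < c ∧ c ≤ C ∧
      ∀ d μs νs ξs : ℝ, 0 ≤ d → 0 ≤ μs → 0 ≤ νs → 0 ≤ ξs →
        ENNReal.ofReal (c * min (d * μs * νs + μs * ξs + νs * ξs) (d * νs + ξs)) ≤
          volume ((fun p : ℝ × ℝ => ((p.1 : AddCircle (4 * Real.pi)), p.2)) ''
            {p : ℝ × ℝ | ∃ μ ν ξ : ℝ,
              |μ| ≤ μs ∧ |ν| ≤ νs ∧ |ξ| ≤ ξs ∧ p = (μ + ν, d * ν + ξ)}) ∧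
        volume ((fun p : ℝ × ℝ => ((p.1 : AddCircle (4 * Real.pi)), p.2)) ''
            {p : ℝ × ℝ | ∃ μ ν ξ : ℝ,
              |μ| ≤ μs ∧ |ν| ≤ νs ∧ |ξ| ≤ ξs ∧ p = (μ + ν, d * ν + ξ)}) ≤
          ENNReal.ofReal (C * min (d * μs * νs + μs * ξs + νs * ξs) (d * νs + ξs)) := by
  refine ⟨1/4, 32, by norm_num, by norm_num, ?_⟩
  intro d μs νs ξs hd hμs hνs hξs
  have hπ3 : (3:ℝ) < Real.pi := Real.pi_gt_three
  have hπ4 : Real.pi ≤ 4 := Real.pi_le_four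
  have hπ0 : (0:ℝ) < Real.pi := Real.pi_pos
  set Ht : Set (ℝ × ℝ) := {p : ℝ × ℝ | ∃ μ ν ξ : ℝ,
      |μ| ≤ μs ∧ |ν| ≤ νs ∧ |ξ| ≤ ξs ∧ p = (μ + ν, d * ν + ξ)} with hHtdef
  have hHtEq : Ht = (fun t : ℝ × ℝ × ℝ => (t.1 + t.2.1, d * t.2.1 + t.2.2)) ''
      (Icc (-μs) μs ×ˢ Icc (-νs) νs ×ˢ Icc (-ξs) ξs) := by
    ext p
    simp only [hHtdef, mem_setOf_eq, mem_image, mem_prod, mem_Icc]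
    constructor
    · rintro ⟨μ, ν, ξ, h1, h2, h3, rfl⟩
      exact ⟨(μ, ν, ξ), ⟨abs_le.mp h1, abs_le.mp h2, abs_le.mp h3⟩, rfl⟩
    · rintro ⟨⟨μ, ν, ξ⟩, ⟨h1, h2, h3⟩, rfl⟩
      exact ⟨μ, ν, ξ, abs_le.mpr h1, abs_le.mpr h2, abs_le.mpr h3, rfl⟩
  have hcomp : IsCompact Ht := by
    rw [hHtEq]
    exact (isCompact_Icc.prod (isCompact_Icc.prod isCompact_Icc)).image (by fun_prop)
  have hmeas : MeasurableSet Ht := hcomp.measurableSet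
  set V1 : ℝ := d * μs * νs + μs * ξs + νs * ξs with hV1def
  set V2 : ℝ := d * νs + ξs with hV2def
  constructor
  · -- LOWER BOUND
    rcases le_or_gt (min V1 V2) 0 with hm | hm
    · rw [ENNReal.ofReal_eq_zero.mpr (by nlinarith)]
      exact zero_le
    have hV1 : 0 < V1 := lt_of_lt_of_le hm (min_le_left _ _)
    have hV2 : 0 < V2 := lt_of_lt_of_le hm (min_le_right _ _)
    have useLB : ∀ (S : Set (ℝ × ℝ)) (g : ℝ → ℝ), MeasurableSet S → S ⊆ Ht →
        (∀ p ∈ S, p.1 ∈ Ioc (g p.2) (g p.2 + 4 * Real.pi)) →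
        volume S ≤ volume (q '' Ht) := fun S g hsm hsub hgg =>
      (lowerMain hsm g hgg).trans (measure_mono (image_mono hsub))
    have hgoal : ∀ r : ℝ, ENNReal.ofReal r ≤ volume (q '' Ht) →
        (1/4 : ℝ) * min V1 V2 ≤ r →
        ENNReal.ofReal ((1/4 : ℝ) * min V1 V2) ≤
          volume ((fun p : ℝ × ℝ => ((p.1 : AddCircle (4 * Real.pi)), p.2)) '' Ht) :=
      fun r hr hler => le_trans (ENNReal.ofReal_le_ofReal hler) hr
    -- B1 : slab {|x| ≤ min μs (π/2), |y| ≤ ξs}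
    have B1 : ENNReal.ofReal ((2 * min μs (Real.pi/2)) * (2 * ξs)) ≤ volume (q '' Ht) := by
      rw [← areaSlab1 (a := min μs (Real.pi/2)) (b := ξs) 0 (le_min hμs (by positivity)) hξs]
      refine useLB _ (fun _ => -(2*Real.pi)) (slabMeas1 _ _ _) ?_ ?_
      · rintro ⟨x, y⟩ ⟨h1, h2⟩
        refine ⟨x, 0, y, le_trans h1 (min_le_left _ _), by simpa using hνs, ?_, ?_⟩
        · simpa using h2
        · simp
      · rintro ⟨x, y⟩ ⟨h1, -⟩
        have := abs_le.mp (le_trans h1 (min_le_right _ _))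
        constructor
        · simp only; linarith [this.1]
        · simp only; linarith [this.2]
    -- B3 : slab {|x| ≤ min νs (π/2), |y - d x| ≤ ξs}
    have B3 : ENNReal.ofReal ((2 * min νs (Real.pi/2)) * (2 * ξs)) ≤ volume (q '' Ht) := by
      rw [← areaSlab1 (a := min νs (Real.pi/2)) (b := ξs) d (le_min hνs (by positivity)) hξs]
      refine useLB _ (fun _ => -(2*Real.pi)) (slabMeas1 _ _ _) ?_ ?_
      · rintro ⟨x, y⟩ ⟨h1, h2⟩
        refine ⟨0, x, y - d * x, by simpa using hμs, le_trans h1 (min_le_left _ _), h2, ?_⟩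
        simp only [Prod.mk.injEq]
        constructor <;> ring
      · rintro ⟨x, y⟩ ⟨h1, -⟩
        have := abs_le.mp (le_trans h1 (min_le_right _ _))
        constructor
        · simp only; linarith [this.1]
        · simp only; linarith [this.2]
    -- B2 (d > 0): slab {|y| ≤ d νs, |x - y/d| ≤ min μs (π/2)}
    have B2 : 0 < d → ENNReal.ofReal ((2 * (d * νs)) * (2 * min μs (Real.pi/2)))
        ≤ volume (q '' Ht) := by
      intro hd0
      rw [← areaSlab2 (a := d * νs) (b := min μs (Real.pi/2)) (1/d)
        (by positivity) (le_min hμs (by positivity))]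
      refine useLB _ (fun y => (1/d) * y - 2*Real.pi) (slabMeas2 _ _ _) ?_ ?_
      · rintro ⟨x, y⟩ ⟨h1, h2⟩
        refine ⟨x - (1/d) * y, (1/d) * y, 0, le_trans h2 (min_le_left _ _), ?_, by simpa using hξs, ?_⟩
        · rw [abs_mul, abs_of_pos (by positivity : (0:ℝ) < 1/d)]
          calc (1/d) * |y| ≤ (1/d) * (d * νs) := by
                have := abs_le.mp h1
                apply mul_le_mul_of_nonneg_left _ (by positivity)
                rw [abs_le]; exact this
            _ = νs := by field_simp
        · simp only [Prod.mk.injEq]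
          constructor
          · ring
          · field_simp; ring
      · rintro ⟨x, y⟩ ⟨-, h2⟩
        have := abs_le.mp (le_trans h2 (min_le_right _ _))
        constructor
        · simp only; linarith [this.1]
        · simp only; linarith [this.2]
    -- B4 (d > 0): slab {|x| ≤ νs, |y - d x| ≤ min ξs (d π/2)}
    have B4 : 0 < d → ENNReal.ofReal ((2 * νs) * (2 * min ξs (d * (Real.pi/2))))
        ≤ volume (q '' Ht) := by
      intro hd0
      rw [← areaSlab1 (a := νs) (b := min ξs (d * (Real.pi/2))) d hνs
        (le_min hξs (by positivity))]
      refine useLB _ (fun y => (y - min ξs (d * (Real.pi/2)))/d - 1) (slabMeas1 _ _ _) ?_ ?_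
      · rintro ⟨x, y⟩ ⟨h1, h2⟩
        exact ⟨0, x, y - d * x, by simpa using hμs, h1,
          le_trans h2 (min_le_left _ _), by simp only [Prod.mk.injEq]; constructor <;> ring⟩
      · rintro ⟨x, y⟩ ⟨-, h2⟩
        set ξd := min ξs (d * (Real.pi/2)) with hξd
        have habs := abs_le.mp h2
        have hu : (y - ξd)/d * d = y - ξd := div_mul_cancel₀ _ (ne_of_gt hd0)
        have hxd1 : y - ξd ≤ x * d := by simp only at habs; linarith [habs.2]
        have hxd2 : x * d ≤ y + ξd := by simp only at habs; linarith [habs.1]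
        have hξdle : ξd ≤ d * (Real.pi/2) := min_le_right _ _
        constructor
        · simp only
          have h5 : ((y - ξd)/d) * d ≤ x * d := by rw [hu]; exact hxd1
          have h6 : (y - ξd)/d ≤ x := le_of_mul_le_mul_right h5 hd0
          linarith
        · simp only
          have h5 : (x - (y - ξd)/d) * d ≤ Real.pi * d := by
            have : x * d - ((y - ξd)/d) * d ≤ 2 * ξd := by rw [hu]; linarith
            nlinarith
          have h6 : x - (y - ξd)/d ≤ Real.pi := le_of_mul_le_mul_right h5 hd0
          linarith
    -- case analysis
    rcases le_or_gt (Real.pi/2) μs with hμ | hμ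
    · rcases le_total (d * νs) ξs with hc | hc
      · refine hgoal _ B1 ?_
        rw [min_eq_right hμ]
        have h := min_le_right V1 V2
        rw [hV2def] at h
        nlinarith
      · have hd0 : 0 < d := by
          by_contra hcon
          push_neg at hcon
          have : d = 0 := le_antisymm hcon hd
          rw [this] at hc
          simp at hc
          rw [hV2def, this] at hV2
          nlinarith [le_antisymm hc hξs]
        refine hgoal _ (B2 hd0) ?_
        rw [min_eq_right hμ]
        have h := min_le_right V1 V2
        rw [hV2def] at h
        nlinarith
    · rcases le_or_gt ξs (d * (Real.pi/2)) with hx | hx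
      · -- triple-max argument with 4νsξs from B4
        have hor : (1/4 : ℝ) * min V1 V2 ≤ 4 * (d * μs * νs) ∨
            (1/4 : ℝ) * min V1 V2 ≤ 4 * (μs * ξs) ∨
            (1/4 : ℝ) * min V1 V2 ≤ 4 * (νs * ξs) := by
          by_contra hcon
          push_neg at hcon
          obtain ⟨c1, c2, c3⟩ := hcon
          have h := min_le_left V1 V2
          rw [hV1def] at h
          nlinarith [hm]
        rcases hor with h | h | h
        · have hd0 : 0 < d := by
            by_contra hcon
            push_neg at hcon
            have : d = 0 := le_antisymm hcon hd
            rw [this] at h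
            nlinarith
          refine hgoal _ (B2 hd0) ?_
          rw [min_eq_left hμ.le]
          nlinarith
        · refine hgoal _ B1 ?_
          rw [min_eq_left hμ.le]
          nlinarith
        · have hd0 : 0 < d := by
            by_contra hcon
            push_neg at hcon
            have hdz : d = 0 := le_antisymm hcon hd
            rw [hdz] at hx
            simp at hx
            nlinarith [le_antisymm hx hξs]
          refine hgoal _ (B4 hd0) ?_
          rw [min_eq_left hx]
          nlinarith
      · rcases le_or_gt (Real.pi/2) νs with hν | hν
        · rcases le_total (d * νs) ξs with hc | hc
          · refine hgoal _ B3 ?_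
            rw [min_eq_right hν]
            have h := min_le_right V1 V2
            rw [hV2def] at h
            nlinarith
          · have hd0 : 0 < d := by
              by_contra hcon
              push_neg at hcon
              have hdz : d = 0 := le_antisymm hcon hd
              rw [hV2def, hdz] at hV2
              rw [hdz] at hc
              simp at hc
              nlinarith [le_antisymm hc hξs]
            refine hgoal _ (B4 hd0) ?_
            rw [min_eq_right hx.le]
            have h := min_le_right V1 V2
            rw [hV2def] at h
            nlinarith
        · -- νs < π/2 : triple-max with 4νsξs from B3
          have hor : (1/4 : ℝ) * min V1 V2 ≤ 4 * (d * μs * νs) ∨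
              (1/4 : ℝ) * min V1 V2 ≤ 4 * (μs * ξs) ∨
              (1/4 : ℝ) * min V1 V2 ≤ 4 * (νs * ξs) := by
            by_contra hcon
            push_neg at hcon
            obtain ⟨c1, c2, c3⟩ := hcon
            have h := min_le_left V1 V2
            rw [hV1def] at h
            nlinarith [hm]
          rcases hor with h | h | h
          · have hd0 : 0 < d := by
              by_contra hcon
              push_neg at hcon
              have : d = 0 := le_antisymm hcon hd
              rw [this] at h
              nlinarith
            refine hgoal _ (B2 hd0) ?_
            rw [min_eq_left hμ.le]
            nlinarith
          · refine hgoal _ B1 ?_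
            rw [min_eq_left hμ.le]
            nlinarith
          · refine hgoal _ B3 ?_
            rw [min_eq_left hν.le]
            nlinarith
  · -- UPPER BOUND
    have hqid : (fun p : ℝ × ℝ => ((p.1 : AddCircle (4 * Real.pi)), p.2)) = q := rfl
    rw [hqid]
    have h4pi : (0:ℝ) < 4 * Real.pi := by positivity
    have hV1n : 0 ≤ V1 := by rw [hV1def]; positivity
    have hV2n : 0 ≤ V2 := by rw [hV2def]; positivity
    -- first upper bound: full cylinder strip
    have hub1 : volume (q '' Ht) ≤ ENNReal.ofReal ((4*Real.pi) * (2*V2)) := by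
      refine le_trans (measure_mono
        (?_ : q '' Ht ⊆ (univ : Set (AddCircle (4*Real.pi))) ×ˢ Icc (-V2) V2)) (le_of_eq ?_)
      · rintro z ⟨⟨x, y⟩, hp, rfl⟩
        obtain ⟨μ, ν, ξ, h1, h2, h3, hpq⟩ := hp
        refine ⟨trivial, ?_⟩
        have hy : y = d * ν + ξ := congrArg Prod.snd hpq
        have hb : |d * ν + ξ| ≤ d * νs + ξs := by
          refine (abs_add_le _ _).trans (add_le_add ?_ h3)
          rw [abs_mul, abs_of_nonneg hd]
          exact mul_le_mul_of_nonneg_left h2 hd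
        have hb2 := abs_le.mp hb
        subst hy
        have hq2 : (q (x, d * ν + ξ)).2 = d * ν + ξ := rfl
        rw [hq2, mem_Icc, hV2def]
        exact ⟨by linarith [hb2.1], by linarith [hb2.2]⟩
      · rw [Measure.volume_eq_prod, Measure.prod_prod, AddCircle.measure_univ, Real.volume_Icc,
          ← ENNReal.ofReal_mul (by positivity)]
        congr 1
        ring
    -- volume of Ht itself
    have hvolHt : volume Ht ≤ ENNReal.ofReal (8*V1) := by
      rw [Measure.volume_eq_prod, Measure.prod_apply hmeas]
      have hbound : ∀ x : ℝ, volume (Prod.mk x ⁻¹' Ht)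
          ≤ (Icc (-(μs+νs)) (μs+νs)).indicator
            (fun _ => ENNReal.ofReal (2*(d*(min μs νs)) + 2*ξs)) x := by
        intro x
        by_cases hx : x ∈ Icc (-(μs+νs)) (μs+νs)
        · rw [indicator_of_mem hx]
          have hsec : Prod.mk x ⁻¹' Ht
              ⊆ Icc (d * (max (x - μs) (-νs)) - ξs) (d * (min (x + μs) νs) + ξs) := by
            rintro y hp
            rw [mem_preimage, hHtdef, mem_setOf_eq] at hp
            obtain ⟨μ, ν, ξ, h1, h2, h3, hpq⟩ := hp
            have he1 : x = μ + ν := congrArg Prod.fst hpq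
            have he2 : y = d * ν + ξ := congrArg Prod.snd hpq
            have hμ1 := abs_le.mp h1
            have hν1 := abs_le.mp h2
            have hξ1 := abs_le.mp h3
            have hν2 : max (x - μs) (-νs) ≤ ν := max_le (by linarith [hμ1.2]) hν1.1
            have hν3 : ν ≤ min (x + μs) νs := le_min (by linarith [hμ1.1]) hν1.2
            have hm2 := mul_le_mul_of_nonneg_left hν2 hd
            have hm3 := mul_le_mul_of_nonneg_left hν3 hd
            constructor
            · simp only [he2]; linarith [hξ1.1]
            · simp only [he2]; linarith [hξ1.2]
          refine le_trans (measure_mono hsec) ?_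
          rw [Real.volume_Icc]
          apply ENNReal.ofReal_le_ofReal
          have hA : min (x + μs) νs - max (x - μs) (-νs) ≤ 2 * min μs νs := by
            rcases le_total μs νs with h | h
            · rw [min_eq_left h]
              have h5 := min_le_left (x+μs) νs
              have h6 := le_max_left (x-μs) (-νs)
              linarith
            · rw [min_eq_right h]
              have h5 := min_le_right (x+μs) νs
              have h6 := le_max_right (x-μs) (-νs)
              linarith
          nlinarith [mul_le_mul_of_nonneg_left hA hd]
        · rw [indicator_of_notMem hx]
          have hempty : Prod.mk x ⁻¹' Ht = ∅ := by
            ext y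
            simp only [mem_preimage, mem_empty_iff_false, iff_false, hHtdef, mem_setOf_eq]
            rintro ⟨μ, ν, ξ, h1, h2, h3, hpq⟩
            have he1 : x = μ + ν := congrArg Prod.fst hpq
            have hμ1 := abs_le.mp h1
            have hν1 := abs_le.mp h2
            exact hx (mem_Icc.mpr ⟨by linarith [hμ1.1, hν1.1], by linarith [hμ1.2, hν1.2]⟩)
          rw [hempty, measure_empty]
      calc (∫⁻ x, volume (Prod.mk x ⁻¹' Ht))
          ≤ ∫⁻ x, (Icc (-(μs+νs)) (μs+νs)).indicator
              (fun _ => ENNReal.ofReal (2*(d*(min μs νs)) + 2*ξs)) x := lintegral_mono hbound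
        _ = ENNReal.ofReal (2*(d*(min μs νs)) + 2*ξs) * volume (Icc (-(μs+νs)) (μs+νs)) := by
            rw [lintegral_indicator measurableSet_Icc _, setLIntegral_const]
        _ ≤ ENNReal.ofReal (8*V1) := by
            rw [Real.volume_Icc, ← ENNReal.ofReal_mul (by positivity)]
            apply ENNReal.ofReal_le_ofReal
            rw [hV1def]
            rcases le_total μs νs with h | h
            · rw [min_eq_left h]
              nlinarith [mul_nonneg (mul_nonneg hd hμs) (sub_nonneg.mpr h),
                mul_nonneg hξs hμs, mul_nonneg hξs hνs]
            · rw [min_eq_right h]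
              nlinarith [mul_nonneg (mul_nonneg hd hνs) (sub_nonneg.mpr h),
                mul_nonneg hξs hμs, mul_nonneg hξs hνs]
    -- wrapped measure at most planar measure
    have hub2 : volume (q '' Ht) ≤ volume Ht := by
      set N : ℤ := ⌈(μs + νs) / (4*Real.pi)⌉ with hN
      have hRN : (μs + νs) / (4*Real.pi) ≤ (N:ℝ) := Int.le_ceil _
      set F : Finset ℤ := Finset.Icc (-(N+1)) N with hF
      have hcov : q '' Ht ⊆ ⋃ k ∈ F, q '' (Ht ∩
          (Icc ((k:ℝ)*(4*Real.pi)) ((k:ℝ)*(4*Real.pi) + 4*Real.pi) ×ˢ (univ : Set ℝ))) := by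
        rintro z ⟨p, hp, rfl⟩
        have hx : |p.1| ≤ μs + νs := by
          have hp' := hp
          rw [hHtdef, mem_setOf_eq] at hp'
          obtain ⟨μ, ν, ξ, h1, h2, h3, hpq⟩ := hp'
          have h5 : p.1 = μ + ν := congrArg Prod.fst hpq
          rw [h5]
          exact (abs_add_le _ _).trans (add_le_add h1 h2)
        have habs := abs_le.mp hx
        set k : ℤ := ⌊p.1 / (4*Real.pi)⌋ with hk
        have hk1 : (k:ℝ) ≤ p.1/(4*Real.pi) := Int.floor_le _
        have hk2 : p.1/(4*Real.pi) < (k:ℝ) + 1 := Int.lt_floor_add_one _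
        have hx1 : (k:ℝ)*(4*Real.pi) ≤ p.1 := by
          have := (le_div_iff₀ h4pi).mp hk1
          linarith
        have hx2 : p.1 ≤ (k:ℝ)*(4*Real.pi) + 4*Real.pi := by
          have := (div_lt_iff₀ h4pi).mp hk2
          nlinarith
        have h9 : p.1/(4*Real.pi) ≤ (μs+νs)/(4*Real.pi) :=
          (div_le_div_iff_of_pos_right h4pi).mpr (by linarith)
        have h10 : -((μs+νs)/(4*Real.pi)) ≤ p.1/(4*Real.pi) := by
          rw [← neg_div]
          exact (div_le_div_iff_of_pos_right h4pi).mpr (by linarith)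
        have hkF : k ∈ F := by
          rw [hF, Finset.mem_Icc]
          constructor
          · have : (-(N+1) : ℝ) ≤ (k:ℝ) := by push_cast; linarith
            exact_mod_cast this
          · have : (k:ℝ) ≤ (N:ℝ) := by linarith
            exact_mod_cast this
        exact mem_iUnion₂.mpr ⟨k, hkF, ⟨p, ⟨hp, ⟨mem_Icc.mpr ⟨hx1, hx2⟩, trivial⟩⟩, rfl⟩⟩
      calc volume (q '' Ht)
          ≤ ∑ k ∈ F, volume (q '' (Ht ∩
              (Icc ((k:ℝ)*(4*Real.pi)) ((k:ℝ)*(4*Real.pi) + 4*Real.pi) ×ˢ (univ : Set ℝ)))) :=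
            le_trans (measure_mono hcov) (measure_biUnion_finset_le _ _)
        _ ≤ ∑ k ∈ F, volume (Ht ∩
              (Ioc ((k:ℝ)*(4*Real.pi)) ((k:ℝ)*(4*Real.pi) + 4*Real.pi) ×ˢ (univ : Set ℝ))) := by
            refine Finset.sum_le_sum fun k _ => ?_
            have hcompk : IsCompact (Ht ∩
                (Icc ((k:ℝ)*(4*Real.pi)) ((k:ℝ)*(4*Real.pi) + 4*Real.pi) ×ˢ (univ : Set ℝ))) :=
              hcomp.inter_right (isClosed_Icc.prod isClosed_univ)
            refine le_trans (upperPiece ((k:ℝ)*(4*Real.pi)) hcompk inter_subset_right) ?_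
            have hsub2 : Ht ∩ (Icc ((k:ℝ)*(4*Real.pi)) ((k:ℝ)*(4*Real.pi) + 4*Real.pi)
                  ×ˢ (univ : Set ℝ))
                ⊆ (Ht ∩ (Ioc ((k:ℝ)*(4*Real.pi)) ((k:ℝ)*(4*Real.pi) + 4*Real.pi)
                  ×ˢ (univ : Set ℝ))) ∪ ({(k:ℝ)*(4*Real.pi)} ×ˢ (univ : Set ℝ)) := by
              rintro ⟨x, y⟩ ⟨hpt, hxI, -⟩
              rcases eq_or_lt_of_le hxI.1 with heq | hlt
              · right
                exact ⟨mem_singleton_iff.mpr heq.symm, trivial⟩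
              · left
                exact ⟨hpt, ⟨hlt, hxI.2⟩, trivial⟩
            calc volume (Ht ∩ (Icc ((k:ℝ)*(4*Real.pi)) ((k:ℝ)*(4*Real.pi) + 4*Real.pi)
                  ×ˢ (univ : Set ℝ)))
                ≤ volume ((Ht ∩ (Ioc ((k:ℝ)*(4*Real.pi)) ((k:ℝ)*(4*Real.pi) + 4*Real.pi)
                  ×ˢ (univ : Set ℝ))) ∪ ({(k:ℝ)*(4*Real.pi)} ×ˢ (univ : Set ℝ))) :=
                  measure_mono hsub2
              _ ≤ volume (Ht ∩ (Ioc ((k:ℝ)*(4*Real.pi)) ((k:ℝ)*(4*Real.pi) + 4*Real.pi)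
                  ×ˢ (univ : Set ℝ))) + volume ({(k:ℝ)*(4*Real.pi)} ×ˢ (univ : Set ℝ)) :=
                  measure_union_le _ _
              _ = volume (Ht ∩ (Ioc ((k:ℝ)*(4*Real.pi)) ((k:ℝ)*(4*Real.pi) + 4*Real.pi)
                  ×ˢ (univ : Set ℝ))) := by rw [vol_line, add_zero]
        _ = volume (⋃ k ∈ F, Ht ∩
              (Ioc ((k:ℝ)*(4*Real.pi)) ((k:ℝ)*(4*Real.pi) + 4*Real.pi) ×ˢ (univ : Set ℝ))) := by
            refine (measure_biUnion_finset ?_ ?_).symm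
            · intro i _ j _ hij
              refine Disjoint.mono inter_subset_right inter_subset_right ?_
              rw [Set.disjoint_left]
              rintro ⟨x, y⟩ ⟨hxi, -⟩ ⟨hxj, -⟩
              apply hij
              by_contra hne
              rcases lt_or_gt_of_ne hne with hlt | hlt
              · have hcast : (i:ℝ) + 1 ≤ (j:ℝ) := by exact_mod_cast hlt
                have := hxi.2
                have := hxj.1
                nlinarith
              · have hcast : (j:ℝ) + 1 ≤ (i:ℝ) := by exact_mod_cast hlt
                have := hxj.2
                have := hxi.1
                nlinarith
            · exact fun i _ => hmeas.inter ((measurableSet_Ioc).prod MeasurableSet.univ)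
        _ ≤ volume Ht := measure_mono (iUnion₂_subset fun k _ => inter_subset_left)
    rcases le_total V1 V2 with hmin | hmin
    · rw [min_eq_left hmin]
      exact le_trans (hub2.trans hvolHt) (ENNReal.ofReal_le_ofReal (by nlinarith))
    · rw [min_eq_right hmin]
      exact le_trans hub1 (ENNReal.ofReal_le_ofReal (by nlinarith))
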